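/- Semi-relaxed approximation error: with Φ(x,y) = (1/(2γ))‖x-y‖², the semi-relaxed OT satisfies 0 ≤ OT(a,b) - ÕT_Φ(a,b) ≤ 2γ‖C‖²_∞ · (max_i 1/a_i)², where ÕT_Φ(a,b) = min_{T≥0, Tᵀ1_m=b} ⟨T,C⟩ + (1/(2γ))‖T1_n - a‖². -/

import Mathlib

open Finset

lemma round_coupling {m n : ℕ}
    (a : Fin m → ℝ) (b : Fin n → ℝ) (C : Matrix (Fin m) (Fin n) ℝ)
    (T : Matrix (Fin m) (Fin n) ℝ) (K : ℝ)
    (ha0 : ∀ i, 0 < a i) (hab : ∑ i, a i = ∑ j, b j)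
    (hC : ∀ i j, 0 ≤ C i j)
    (hT0 : ∀ i j, 0 ≤ T i j) (hTcol : ∀ j, ∑ i, T i j = b j)
    (hK0 : 0 ≤ K) (hK : ∀ i j, C i j ≤ K) :
    ∃ U : Matrix (Fin m) (Fin n) ℝ,
      (∀ i j, 0 ≤ U i j) ∧ (∀ i, ∑ j, U i j = a i) ∧ (∀ j, ∑ i, U i j = b j) ∧
      ∑ i, ∑ j, U i j * C i j ≤
        ∑ i, ∑ j, T i j * C i j + K * ∑ i, |a i - ∑ j, T i j| := by
  set r : Fin m → ℝ := fun i => ∑ j, T i j with hrdef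
  have hr0 : ∀ i, 0 ≤ r i := fun i => Finset.sum_nonneg fun j _ => hT0 i j
  set T' : Matrix (Fin m) (Fin n) ℝ := fun i j => min (r i) (a i) / r i * T i j with hT'def
  have hcoef0 : ∀ i, 0 ≤ min (r i) (a i) / r i := fun i =>
    div_nonneg (le_min (hr0 i) (ha0 i).le) (hr0 i)
  have hcoef1 : ∀ i, min (r i) (a i) / r i ≤ 1 := by
    intro i
    rcases eq_or_lt_of_le (hr0 i) with h | h
    · simp [← h]
    · exact div_le_one_of_le₀ (min_le_left _ _) (hr0 i)
  have hT'0 : ∀ i j, 0 ≤ T' i j := fun i j => mul_nonneg (hcoef0 i) (hT0 i j)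
  have hT'le : ∀ i j, T' i j ≤ T i j := by
    intro i j
    calc T' i j ≤ 1 * T i j := mul_le_mul_of_nonneg_right (hcoef1 i) (hT0 i j)
    _ = T i j := one_mul _
  have hT'row : ∀ i, ∑ j, T' i j = min (r i) (a i) := by
    intro i
    have : ∑ j, T' i j = min (r i) (a i) / r i * r i := by
      rw [hrdef]; simp only [hT'def, ← Finset.mul_sum]; rfl
    rw [this]
    rcases eq_or_lt_of_le (hr0 i) with h | h
    · rw [← h]; simp [min_eq_left (ha0 i).le]
    · rw [div_mul_cancel₀ _ (ne_of_gt h)]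
  set c : Fin n → ℝ := fun j => ∑ i, T' i j with hcdef
  have hcle : ∀ j, c j ≤ b j := by
    intro j
    rw [← hTcol j]
    exact Finset.sum_le_sum fun i _ => hT'le i j
  set d : Fin m → ℝ := fun i => a i - min (r i) (a i) with hddef
  have hd0 : ∀ i, 0 ≤ d i := fun i => sub_nonneg.2 (min_le_right _ _)
  set Δ : ℝ := ∑ i, d i with hΔdef
  have hΔ0 : 0 ≤ Δ := Finset.sum_nonneg fun i _ => hd0 i
  have hbc : ∑ j, (b j - c j) = Δ := by
    rw [Finset.sum_sub_distrib, ← hab, hΔdef, Finset.sum_sub_distrib]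
    congr 1
    rw [hcdef]
    rw [Finset.sum_comm]
    exact Finset.sum_congr rfl fun i _ => hT'row i
  have hcostT' : ∑ i, ∑ j, T' i j * C i j ≤ ∑ i, ∑ j, T i j * C i j :=
    Finset.sum_le_sum fun i _ => Finset.sum_le_sum fun j _ =>
      mul_le_mul_of_nonneg_right (hT'le i j) (hC i j)
  have hΔle : Δ ≤ ∑ i, |a i - r i| := by
    refine Finset.sum_le_sum fun i _ => ?_
    rcases min_cases (r i) (a i) with ⟨h1, _⟩ | ⟨h1, _⟩
    · rw [hddef]; simp only [h1]; exact le_abs_self _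
    · rw [hddef]; simp only [h1, sub_self]; exact abs_nonneg _
  have hKs : 0 ≤ K * ∑ i, |a i - r i| :=
    mul_nonneg hK0 (Finset.sum_nonneg fun i _ => abs_nonneg _)
  rcases eq_or_lt_of_le hΔ0 with hΔz | hΔpos
  · -- Δ = 0
    have hdall : ∀ i ∈ Finset.univ, d i = 0 :=
      (Finset.sum_eq_zero_iff_of_nonneg fun i _ => hd0 i).1 hΔz.symm
    have hball : ∀ j ∈ Finset.univ, b j - c j = 0 := by
      apply (Finset.sum_eq_zero_iff_of_nonneg fun j _ => sub_nonneg.2 (hcle j)).1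
      rw [hbc, ← hΔz]
    refine ⟨T', hT'0, ?_, ?_, le_trans hcostT' (le_add_of_nonneg_right hKs)⟩
    · intro i
      have := hdall i (Finset.mem_univ i)
      rw [hT'row i]
      rw [hddef] at this; simp only at this; linarith
    · intro j
      have := hball j (Finset.mem_univ j)
      have hcj : c j = ∑ i, T' i j := rfl
      rw [← hcj]; linarith
  · -- Δ > 0
    refine ⟨fun i j => T' i j + d i * (b j - c j) / Δ, ?_, ?_, ?_, ?_⟩
    · intro i j
      have : 0 ≤ d i * (b j - c j) / Δ :=
        div_nonneg (mul_nonneg (hd0 i) (sub_nonneg.2 (hcle j))) hΔ0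
      exact add_nonneg (hT'0 i j) this
    · intro i
      rw [Finset.sum_add_distrib, hT'row i]
      have : ∑ j, d i * (b j - c j) / Δ = d i * Δ / Δ := by
        rw [← Finset.sum_div, ← Finset.mul_sum, hbc]
      rw [this, mul_div_assoc, div_self (ne_of_gt hΔpos), mul_one]
      rw [hddef]; ring
    · intro j
      rw [Finset.sum_add_distrib]
      have h1 : ∑ i, T' i j = c j := rfl
      have : ∑ i, d i * (b j - c j) / Δ = Δ * (b j - c j) / Δ := by
        rw [← Finset.sum_div, ← Finset.sum_mul]
      rw [h1, this, mul_comm, mul_div_assoc, div_self (ne_of_gt hΔpos), mul_one]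
      ring
    · have expand : ∑ i, ∑ j, (T' i j + d i * (b j - c j) / Δ) * C i j
          = (∑ i, ∑ j, T' i j * C i j) + ∑ i, ∑ j, d i * (b j - c j) / Δ * C i j := by
        rw [← Finset.sum_add_distrib]
        refine Finset.sum_congr rfl fun i _ => ?_
        rw [← Finset.sum_add_distrib]
        exact Finset.sum_congr rfl fun j _ => by ring
      rw [expand]
      have hbound : ∑ i, ∑ j, d i * (b j - c j) / Δ * C i j ≤ K * Δ := by
        have step1 : ∑ i, ∑ j, d i * (b j - c j) / Δ * C i j
            ≤ ∑ i, ∑ j, d i * (b j - c j) / Δ * K := by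
          refine Finset.sum_le_sum fun i _ => Finset.sum_le_sum fun j _ => ?_
          exact mul_le_mul_of_nonneg_left (hK i j)
            (div_nonneg (mul_nonneg (hd0 i) (sub_nonneg.2 (hcle j))) hΔ0)
        refine le_trans step1 (le_of_eq ?_)
        have : ∑ i, ∑ j, d i * (b j - c j) / Δ * K
            = (∑ i, d i) * (∑ j, (b j - c j)) / Δ * K := by
          rw [Finset.sum_mul, Finset.sum_div, Finset.sum_mul]
          refine Finset.sum_congr rfl fun i _ => ?_
          rw [Finset.mul_sum, Finset.sum_div, Finset.sum_mul]
        rw [this, hbc, ← hΔdef, mul_div_assoc, div_self (ne_of_gt hΔpos), mul_one]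
        ring
      have hKΔ : K * Δ ≤ K * ∑ i, |a i - r i| := mul_le_mul_of_nonneg_left hΔle hK0
      linarith

theorem semi_relaxed_approx_error {m n : ℕ}
    (a : Fin m → ℝ) (b : Fin n → ℝ) (C : Matrix (Fin m) (Fin n) ℝ) (γ : ℝ)
    (hγ : 0 < γ)
    (ha0 : ∀ i, 0 < a i) (ha1 : ∑ i, a i = 1)
    (hb0 : ∀ j, 0 < b j) (hb1 : ∑ j, b j = 1)
    (hC : ∀ i j, 0 ≤ C i j) :
    0 ≤ sInf {v : ℝ | ∃ T : Matrix (Fin m) (Fin n) ℝ,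
          (∀ i j, 0 ≤ T i j) ∧ (∀ i, ∑ j, T i j = a i) ∧ (∀ j, ∑ i, T i j = b j) ∧
          v = ∑ i, ∑ j, T i j * C i j} -
        sInf {w : ℝ | ∃ T : Matrix (Fin m) (Fin n) ℝ,
          (∀ i j, 0 ≤ T i j) ∧ (∀ j, ∑ i, T i j = b j) ∧
          w = (∑ i, ∑ j, T i j * C i j) +
            1 / (2 * γ) * ∑ i, ((∑ j, T i j) - a i) ^ 2} ∧
    sInf {v : ℝ | ∃ T : Matrix (Fin m) (Fin n) ℝ,
          (∀ i j, 0 ≤ T i j) ∧ (∀ i, ∑ j, T i j = a i) ∧ (∀ j, ∑ i, T i j = b j) ∧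
          v = ∑ i, ∑ j, T i j * C i j} -
        sInf {w : ℝ | ∃ T : Matrix (Fin m) (Fin n) ℝ,
          (∀ i j, 0 ≤ T i j) ∧ (∀ j, ∑ i, T i j = b j) ∧
          w = (∑ i, ∑ j, T i j * C i j) +
            1 / (2 * γ) * ∑ i, ((∑ j, T i j) - a i) ^ 2} ≤
      2 * γ * (⨆ i, ⨆ j, C i j) ^ 2 * (⨆ i, 1 / a i) ^ 2 := by
  have hm : 0 < m := by
    rcases Nat.eq_zero_or_pos m with h | h
    · subst h; simp at ha1
    · exact h
  have hn : 0 < n := by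
    rcases Nat.eq_zero_or_pos n with h | h
    · subst h; simp at hb1
    · exact h
  have : Nonempty (Fin m) := ⟨⟨0, hm⟩⟩
  have : Nonempty (Fin n) := ⟨⟨0, hn⟩⟩
  set S1 := {v : ℝ | ∃ T : Matrix (Fin m) (Fin n) ℝ,
          (∀ i j, 0 ≤ T i j) ∧ (∀ i, ∑ j, T i j = a i) ∧ (∀ j, ∑ i, T i j = b j) ∧
          v = ∑ i, ∑ j, T i j * C i j} with hS1def
  set S2 := {w : ℝ | ∃ T : Matrix (Fin m) (Fin n) ℝ,
          (∀ i j, 0 ≤ T i j) ∧ (∀ j, ∑ i, T i j = b j) ∧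
          w = (∑ i, ∑ j, T i j * C i j) +
            1 / (2 * γ) * ∑ i, ((∑ j, T i j) - a i) ^ 2} with hS2def
  set K := ⨆ i, ⨆ j, C i j with hKdef
  set M := ⨆ i, (1 : ℝ) / a i with hMdef
  have hKub : ∀ i j, C i j ≤ K := by
    intro i j
    calc C i j ≤ ⨆ j, C i j := le_ciSup (Set.Finite.bddAbove (Set.finite_range _)) j
    _ ≤ K := le_ciSup (f := fun i => ⨆ j, C i j)
      (Set.Finite.bddAbove (Set.finite_range _)) i
  have hK0 : 0 ≤ K := le_trans (hC ⟨0, hm⟩ ⟨0, hn⟩) (hKub _ _)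
  -- bound on M
  obtain ⟨i0, -, hi0⟩ := Finset.exists_min_image Finset.univ a ⟨⟨0, hm⟩, Finset.mem_univ _⟩
  have hmub : (m : ℝ) * a i0 ≤ 1 := by
    rw [← ha1]
    have h1 : (m : ℝ) * a i0 = ∑ _i : Fin m, a i0 := by
      simp [Finset.sum_const, mul_comm]
    rw [h1]
    exact Finset.sum_le_sum fun i _ => hi0 i (Finset.mem_univ i)
  have hMge : 1 / a i0 ≤ M := le_ciSup (f := fun i => (1:ℝ) / a i) (Set.Finite.bddAbove (Set.finite_range _)) i0
  have hmM : (m : ℝ) ≤ M := by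
    have : (m : ℝ) ≤ 1 / a i0 := by
      rw [le_div_iff₀ (ha0 i0)]; linarith
    linarith
  have h1M : (1 : ℝ) ≤ M := by
    have ha1' : a i0 ≤ 1 := by
      have : (1 : ℝ) ≤ (m : ℝ) := by exact_mod_cast hm
      nlinarith [ha0 i0]
    have : (1 : ℝ) ≤ 1 / a i0 := by
      rw [le_div_iff₀ (ha0 i0)]; linarith
    linarith
  have hB : γ * m * K ^ 2 ≤ 2 * γ * K ^ 2 * M ^ 2 := by
    have h2 : (m : ℝ) ≤ M ^ 2 := by nlinarith
    have h3 := mul_le_mul_of_nonneg_left h2 (mul_nonneg hγ.le (sq_nonneg K))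
    have h4 : 0 ≤ γ * K ^ 2 * M ^ 2 := by positivity
    nlinarith
  -- nonemptiness and bounds
  have hprod : ((fun i j => a i * b j : Matrix (Fin m) (Fin n) ℝ)) ∈
      {T : Matrix (Fin m) (Fin n) ℝ | (∀ i j, 0 ≤ T i j) ∧ (∀ i, ∑ j, T i j = a i) ∧
        (∀ j, ∑ i, T i j = b j)} := by
    refine ⟨fun i j => mul_nonneg (ha0 i).le (hb0 j).le, fun i => ?_, fun j => ?_⟩
    · rw [← Finset.mul_sum, hb1, mul_one]
    · rw [← Finset.sum_mul, ha1, one_mul]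
  have hS1ne : S1.Nonempty :=
    ⟨_, ⟨_, hprod.1, hprod.2.1, hprod.2.2, rfl⟩⟩
  have hS2ne : S2.Nonempty := by
    refine ⟨_, ⟨_, hprod.1, hprod.2.2, rfl⟩⟩
  have hS1bdd : BddBelow S1 := by
    refine ⟨0, ?_⟩
    rintro v ⟨T, hT0, -, -, rfl⟩
    exact Finset.sum_nonneg fun i _ => Finset.sum_nonneg fun j _ =>
      mul_nonneg (hT0 i j) (hC i j)
  have hS2bdd : BddBelow S2 := by
    refine ⟨0, ?_⟩
    rintro w ⟨T, hT0, -, rfl⟩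
    have h1 : (0:ℝ) ≤ ∑ i, ∑ j, T i j * C i j :=
      Finset.sum_nonneg fun i _ => Finset.sum_nonneg fun j _ =>
        mul_nonneg (hT0 i j) (hC i j)
    have h2 : (0:ℝ) ≤ 1 / (2 * γ) * ∑ i, ((∑ j, T i j) - a i) ^ 2 := by
      apply mul_nonneg (by positivity)
      exact Finset.sum_nonneg fun i _ => sq_nonneg _
    linarith
  -- Part 1 : sInf S2 ≤ sInf S1
  have part1 : sInf S2 ≤ sInf S1 := by
    refine le_csInf hS1ne ?_
    rintro v ⟨T, hT0, hTrow, hTcol, rfl⟩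
    refine csInf_le hS2bdd ⟨T, hT0, hTcol, ?_⟩
    simp [hTrow]
  -- Part 2
  have part2 : sInf S1 - 2 * γ * K ^ 2 * M ^ 2 ≤ sInf S2 := by
    refine le_csInf hS2ne ?_
    rintro w ⟨T, hT0, hTcol, rfl⟩
    obtain ⟨U, hU0, hUrow, hUcol, hUcost⟩ :=
      round_coupling a b C T K ha0 (by rw [ha1, hb1]) hC hT0 hTcol hK0 hKub
    have h1 : sInf S1 ≤ ∑ i, ∑ j, U i j * C i j :=
      csInf_le hS1bdd ⟨U, hU0, hUrow, hUcol, rfl⟩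
    set s := ∑ i, |a i - ∑ j, T i j| with hsdef
    have hs0 : 0 ≤ s := Finset.sum_nonneg fun i _ => abs_nonneg _
    have hCS : s ^ 2 ≤ (m : ℝ) * ∑ i, ((∑ j, T i j) - a i) ^ 2 := by
      have := Finset.sum_mul_sq_le_sq_mul_sq Finset.univ (fun _ : Fin m => (1:ℝ))
        (fun i => |a i - ∑ j, T i j|)
      simp only [one_mul, one_pow, sq_abs] at this
      calc s ^ 2 ≤ (∑ _i : Fin m, (1:ℝ)) * ∑ i, (a i - ∑ j, T i j) ^ 2 := this
      _ = (m : ℝ) * ∑ i, ((∑ j, T i j) - a i) ^ 2 := by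
          have e1 : (∑ _i : Fin m, (1:ℝ)) = (m : ℝ) := by simp
          have e2 : ∑ i, (a i - ∑ j, T i j) ^ 2 = ∑ i, ((∑ j, T i j) - a i) ^ 2 :=
            Finset.sum_congr rfl fun i _ => by ring
          rw [e1, e2]
    have hmR : (0:ℝ) < m := by exact_mod_cast hm
    have hAMGM : K * s ≤ s ^ 2 / (4 * γ * m) + γ * m * K ^ 2 := by
      have h4 : (0:ℝ) < 4 * γ * m := by positivity
      rw [div_add' _ _ _ (ne_of_gt h4), le_div_iff₀ h4]
      nlinarith [sq_nonneg (s - 2 * γ * ↑m * K)]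
    have hpen : s ^ 2 / (4 * γ * m) ≤ 1 / (2 * γ) * ∑ i, ((∑ j, T i j) - a i) ^ 2 := by
      rw [div_le_iff₀ (by positivity : (0:ℝ) < 4 * γ * m)]
      have hsum0 : (0:ℝ) ≤ ∑ i, ((∑ j, T i j) - a i) ^ 2 :=
        Finset.sum_nonneg fun i _ => sq_nonneg _
      have heq : ∀ X : ℝ, 1 / (2 * γ) * X * (4 * γ * ↑m) = 2 * ↑m * X := fun X => by
        field_simp; ring
      rw [heq]
      nlinarith
    have hcost : ∑ i, ∑ j, U i j * C i j
        ≤ (∑ i, ∑ j, T i j * C i j) + 1 / (2 * γ) * ∑ i, ((∑ j, T i j) - a i) ^ 2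
          + γ * m * K ^ 2 := by
      calc ∑ i, ∑ j, U i j * C i j ≤ ∑ i, ∑ j, T i j * C i j + K * s := hUcost
      _ ≤ _ := by linarith
    linarith
  exact ⟨by linarith, by linarith⟩
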